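/- Pointwise Poisson bracket identity and lower bound: let μ ∈ (0,2), K > 0, let V₁ ∈ C¹(ℝ^d \ {0}) be real, and set f₀(x) = (K⟨x⟩^{-μ})^{1/2}, h₁(x,ξ) = |ξ|² + V₁(x), b(x,ξ) = (ξ·x)/(f₀(x)⟨x⟩), W(x) = -2V₁(x) - x·∇V₁(x). Then the Poisson bracket {h₁, b} = ∇_ξh₁·∇_x b - ∇_x h₁·∇_ξ b satisfies {h₁, b}(x,ξ) = ⟨x⟩^{μ/2-1}(W(x) - (2-μ)K⟨x⟩^{-μ} b(x,ξ)² + 2h₁(x,ξ))/√K. Moreover, if in addition W(x) ≥ ε₁ε̃₁⟨x⟩^{-μ} and K = ε₁ε̃₁/(2-μ), then {h₁,b}(x,ξ) ≥ (2-μ)√K ⟨x⟩^{-μ/2-1}(1 - b(x,ξ)²) + 2⟨x⟩^{μ/2-1} h₁(x,ξ)/√K. -/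

import Mathlib

noncomputable section

variable {d : ℕ}

/-- The Japanese bracket `⟨x⟩ = (|x|² + 1)^{1/2}` on `ℝ^d`. -/
def jap (x : EuclideanSpace ℝ (Fin d)) : ℝ := Real.sqrt (‖x‖ ^ 2 + 1)

/-- The Poisson bracket `{p, q} = ∇_ξ p · ∇_x q - ∇_x p · ∇_ξ q` of two functions
`p q : ℝ^d × ℝ^d → ℝ` on phase space (written in curried form: `p x ξ`). -/
def pb (p q : EuclideanSpace ℝ (Fin d) → EuclideanSpace ℝ (Fin d) → ℝ)
    (x ξ : EuclideanSpace ℝ (Fin d)) : ℝ :=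
  (inner ℝ (gradient (fun η => p x η) ξ) (gradient (fun y => q y ξ) x) : ℝ) -
    (inner ℝ (gradient (fun y => p y ξ) x) (gradient (fun η => q x η) ξ) : ℝ)

/-- The symbol `f₀(x) = (K ⟨x⟩^{-μ})^{1/2}`. -/
def fzero (μ K : ℝ) (x : EuclideanSpace ℝ (Fin d)) : ℝ := Real.sqrt (K * jap x ^ (-μ))

/-- The symbol `h₁(x,ξ) = |ξ|² + V₁(x)`. -/
def hone (V₁ : EuclideanSpace ℝ (Fin d) → ℝ) (x ξ : EuclideanSpace ℝ (Fin d)) : ℝ :=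
  ‖ξ‖ ^ 2 + V₁ x

/-- The symbol `b(x,ξ) = (ξ·x)/(f₀(x)⟨x⟩)`. -/
def bsym (μ K : ℝ) (x ξ : EuclideanSpace ℝ (Fin d)) : ℝ :=
  (inner ℝ ξ x : ℝ) / (fzero μ K x * jap x)

/-- The virial weight `W(x) = -2V₁(x) - x·∇V₁(x)`. -/
def Wfun (V₁ : EuclideanSpace ℝ (Fin d) → ℝ) (x : EuclideanSpace ℝ (Fin d)) : ℝ :=
  -2 * V₁ x - (inner ℝ (gradient V₁ x) x : ℝ)

lemma T_pos (x : EuclideanSpace ℝ (Fin d)) : (0:ℝ) < ‖x‖ ^ 2 + 1 := by positivity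

lemma jap_rpow (x : EuclideanSpace ℝ (Fin d)) (r : ℝ) :
    jap x ^ r = (‖x‖ ^ 2 + 1) ^ (r / 2) := by
  rw [jap, Real.sqrt_eq_rpow, ← Real.rpow_mul (T_pos x).le]
  ring_nf

lemma fj_eq (μ K : ℝ) (hK : 0 < K) (x : EuclideanSpace ℝ (Fin d)) :
    fzero μ K x * jap x = Real.sqrt K * (‖x‖ ^ 2 + 1) ^ ((2 - μ) / 4) := by
  have hT := T_pos x
  rw [fzero, jap_rpow, Real.sqrt_mul hK.le, jap, Real.sqrt_eq_rpow, Real.sqrt_eq_rpow,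
    ← Real.rpow_mul hT.le, Real.sqrt_eq_rpow (‖x‖ ^ 2 + 1), mul_assoc, ← Real.rpow_add hT,
    ← Real.sqrt_eq_rpow]
  ring_nf

lemma bsym_eq (μ K : ℝ) (hK : 0 < K) (x ξ : EuclideanSpace ℝ (Fin d)) :
    bsym μ K x ξ = (Real.sqrt K)⁻¹ * ((inner ℝ ξ x : ℝ) * (‖x‖ ^ 2 + 1) ^ ((μ - 2) / 4)) := by
  have hT := T_pos x
  rw [bsym, fj_eq μ K hK, div_eq_mul_inv, mul_inv, show (μ - 2) / 4 = -((2 - μ) / 4) by ring,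
    Real.rpow_neg hT.le]
  ring

open InnerProductSpace in
lemma hasGradient_of_fderiv {F : Type*} [NormedAddCommGroup F] [InnerProductSpace ℝ F]
    [CompleteSpace F] {f : F → ℝ} {L : F →L[ℝ] ℝ} {g x : F} (h : HasFDerivAt f L x)
    (hg : ∀ v, L v = (inner ℝ g v : ℝ)) : HasGradientAt f g x := by
  rw [hasGradientAt_iff_hasFDerivAt]
  have : toDual ℝ F g = L := by ext v; simp [toDual_apply_apply, hg v]
  rw [this]; exact h

lemma gradA (V₁ : EuclideanSpace ℝ (Fin d) → ℝ) (x ξ : EuclideanSpace ℝ (Fin d)) :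
    HasGradientAt (fun η => hone V₁ x η) ((2:ℝ) • ξ) ξ := by
  apply hasGradient_of_fderiv (L := (2:ℕ) • innerSL ℝ ξ)
  · have h := (hasFDerivAt_id (𝕜 := ℝ) ξ).norm_sq.add_const (V₁ x)
    simpa [hone] using h
  · intro v
    simp only [ContinuousLinearMap.smul_apply, innerSL_apply_apply, real_inner_smul_left,
      nsmul_eq_mul, Nat.cast_ofNat]

lemma gradB (V₁ : EuclideanSpace ℝ (Fin d) → ℝ) (x ξ : EuclideanSpace ℝ (Fin d))
    (hd : DifferentiableAt ℝ V₁ x) :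
    HasGradientAt (fun y => hone V₁ y ξ) (gradient V₁ x) x := by
  have h := hd.hasGradientAt
  rw [hasGradientAt_iff_hasFDerivAt] at h ⊢
  exact h.const_add _

lemma gradC (μ K : ℝ) (hK : 0 < K) (x ξ : EuclideanSpace ℝ (Fin d)) :
    HasGradientAt (fun η => bsym μ K x η)
      (((Real.sqrt K)⁻¹ * (‖x‖ ^ 2 + 1) ^ ((μ - 2) / 4)) • x) ξ := by
  have hfun : (fun η => bsym μ K x η) =
      fun η => (((Real.sqrt K)⁻¹ * (‖x‖ ^ 2 + 1) ^ ((μ - 2) / 4)) • innerSL ℝ x) η := by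
    funext η
    rw [bsym_eq μ K hK]
    simp only [ContinuousLinearMap.smul_apply, innerSL_apply_apply, smul_eq_mul,
      real_inner_comm x η]
    ring
  rw [hfun]
  apply hasGradient_of_fderiv (ContinuousLinearMap.hasFDerivAt _)
  intro v
  simp only [ContinuousLinearMap.smul_apply, innerSL_apply_apply, smul_eq_mul, real_inner_smul_left]

lemma gradD (μ K : ℝ) (hK : 0 < K) (x ξ : EuclideanSpace ℝ (Fin d)) :
    HasGradientAt (fun y => bsym μ K y ξ)
      ((Real.sqrt K)⁻¹ • (((‖x‖ ^ 2 + 1) ^ ((μ - 2) / 4)) • ξ +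
        (2 * ((μ - 2) / 4) * (inner ℝ ξ x : ℝ) * (‖x‖ ^ 2 + 1) ^ ((μ - 2) / 4 - 1)) • x)) x := by
  set α : ℝ := (μ - 2) / 4 with hα
  have hT := T_pos x
  have h1 : HasFDerivAt (fun y : EuclideanSpace ℝ (Fin d) => (inner ℝ ξ y : ℝ)) (innerSL ℝ ξ) x :=
    (innerSL ℝ ξ).hasFDerivAt
  have h2 : HasFDerivAt (fun y : EuclideanSpace ℝ (Fin d) => ‖y‖ ^ 2 + 1)
      ((2:ℕ) • innerSL ℝ x) x := by
    simpa using (hasFDerivAt_id (𝕜 := ℝ) x).norm_sq.add_const (1:ℝ)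
  have h3 := h2.rpow_const (p := α) (Or.inl hT.ne')
  have h4 := h1.mul h3
  have h5 := h4.const_mul ((Real.sqrt K)⁻¹)
  have hfun : (fun y => bsym μ K y ξ) =
      fun y => (Real.sqrt K)⁻¹ * ((inner ℝ ξ y : ℝ) * (‖y‖ ^ 2 + 1) ^ α) := by
    funext y; exact bsym_eq μ K hK y ξ
  rw [hfun]
  apply hasGradient_of_fderiv h5
  intro v
  simp only [ContinuousLinearMap.add_apply, ContinuousLinearMap.smul_apply, innerSL_apply_apply,
    smul_eq_mul, nsmul_eq_mul, Nat.cast_ofNat, inner_add_left, real_inner_smul_left]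
  ring

lemma pb_eq (μ K : ℝ) (hK : 0 < K) (V₁ : EuclideanSpace ℝ (Fin d) → ℝ)
    (x ξ : EuclideanSpace ℝ (Fin d)) (hd : DifferentiableAt ℝ V₁ x) :
    pb (hone V₁) (bsym μ K) x ξ =
      jap x ^ (μ / 2 - 1) *
        (Wfun V₁ x - (2 - μ) * K * jap x ^ (-μ) * bsym μ K x ξ ^ 2 +
          2 * hone V₁ x ξ) / Real.sqrt K := by
  have hT := T_pos x
  have hsK : (0:ℝ) < Real.sqrt K := Real.sqrt_pos.mpr hK
  have hB : (0:ℝ) < (‖x‖ ^ 2 + 1) ^ ((μ - 2) / 4) := Real.rpow_pos_of_pos hT _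
  set T : ℝ := ‖x‖ ^ 2 + 1 with hTdef
  set B : ℝ := T ^ ((μ - 2) / 4) with hBdef
  rw [pb, (gradA V₁ x ξ).gradient, (gradB V₁ x ξ hd).gradient, (gradC μ K hK x ξ).gradient,
    (gradD μ K hK x ξ).gradient]
  rw [jap_rpow, jap_rpow, bsym_eq μ K hK, Wfun, hone,
    show (μ / 2 - 1) / 2 = (μ - 2) / 4 by ring, show -μ / 2 = -μ / 2 from rfl]
  have hBT : T ^ ((μ - 2) / 4 - 1) = B / T := by
    rw [Real.rpow_sub hT, Real.rpow_one]
  have hMu : T ^ (-μ / 2) = (T * B ^ 2)⁻¹ := by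
    have h1 : T * B ^ 2 = T ^ (1 + ((μ - 2) / 4 + (μ - 2) / 4)) := by
      rw [Real.rpow_add hT, Real.rpow_add hT, Real.rpow_one, sq]
    rw [h1, ← Real.rpow_neg_one (T ^ _), ← Real.rpow_mul hT.le,
      show (1 + ((μ - 2) / 4 + (μ - 2) / 4)) * -1 = -μ / 2 by ring]
  rw [hBT, show (-μ) / 2 = -μ / 2 by ring, hMu]
  simp only [inner_add_right, real_inner_smul_left, real_inner_smul_right, smul_eq_mul,
    real_inner_self_eq_norm_sq]
  have hK' : Real.sqrt K ^ 2 = K := Real.sq_sqrt hK.le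
  field_simp
  rw [← hTdef, ← hBdef, hK']
  nlinarith [sq_nonneg ((inner ℝ ξ x : ℝ)), hK', hB.ne', hT.ne',
    mul_pos hT hB]

lemma jap_pos (x : EuclideanSpace ℝ (Fin d)) : 0 < jap x :=
  Real.sqrt_pos.mpr (T_pos x)


/-- with `f₀ = (K⟨x⟩^{-μ})^{1/2}`, `h₁ = |ξ|² + V₁`,
`b = (ξ·x)/(f₀(x)⟨x⟩)` and `W = -2V₁ - x·∇V₁`, for real `V₁ ∈ C¹(ℝ^d \ {0})` one has
the identity `{h₁, b} = ⟨x⟩^{μ/2-1}(W - (2-μ)K⟨x⟩^{-μ}b² + 2h₁)/√K` away from `0`;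
moreover if in addition `W ≥ ε₁ε̃₁⟨x⟩^{-μ}` and `K = ε₁ε̃₁/(2-μ)` then
`{h₁, b} ≥ (2-μ)√K ⟨x⟩^{-μ/2-1}(1 - b²) + 2⟨x⟩^{μ/2-1} h₁/√K`. -/
theorem stmt16 (μ K e₁ et₁ : ℝ) (hμ0 : 0 < μ) (hμ2 : μ < 2) (hK : 0 < K)
    (he₁ : 0 < e₁) (het₁ : 0 < et₁)
    (V₁ : EuclideanSpace ℝ (Fin d) → ℝ)
    (hV : ContDiffOn ℝ 1 V₁ {(0 : EuclideanSpace ℝ (Fin d))}ᶜ) :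
    (∀ x : EuclideanSpace ℝ (Fin d), x ≠ 0 → ∀ ξ,
      pb (hone V₁) (bsym μ K) x ξ =
        jap x ^ (μ / 2 - 1) *
          (Wfun V₁ x - (2 - μ) * K * jap x ^ (-μ) * bsym μ K x ξ ^ 2 +
            2 * hone V₁ x ξ) / Real.sqrt K) ∧
    ((∀ x : EuclideanSpace ℝ (Fin d), x ≠ 0 →
        e₁ * et₁ * jap x ^ (-μ) ≤ Wfun V₁ x) →
      K = e₁ * et₁ / (2 - μ) →
      ∀ x : EuclideanSpace ℝ (Fin d), x ≠ 0 → ∀ ξ,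
        (2 - μ) * Real.sqrt K * jap x ^ (-μ / 2 - 1) * (1 - bsym μ K x ξ ^ 2) +
            2 * jap x ^ (μ / 2 - 1) * hone V₁ x ξ / Real.sqrt K ≤
          pb (hone V₁) (bsym μ K) x ξ) := by

  have hdiff : ∀ x : EuclideanSpace ℝ (Fin d), x ≠ 0 → DifferentiableAt ℝ V₁ x := by
    intro x hx
    have hmem : {(0 : EuclideanSpace ℝ (Fin d))}ᶜ ∈ nhds x :=
      isOpen_compl_singleton.mem_nhds hx
    exact ((hV.contDiffAt hmem).differentiableAt one_ne_zero)
  constructor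
  · intro x hx ξ
    exact pb_eq μ K hK V₁ x ξ (hdiff x hx)
  · intro hW hKe x hx ξ
    rw [pb_eq μ K hK V₁ x ξ (hdiff x hx)]
    have hJ := jap_pos x
    have h2μ : (0:ℝ) < 2 - μ := by linarith
    have hsK : (0:ℝ) < Real.sqrt K := Real.sqrt_pos.mpr hK
    set sK : ℝ := Real.sqrt K with hsKdef
    have h2 : sK * sK = K := Real.mul_self_sqrt hK.le
    have hKe' : (2 - μ) * K = e₁ * et₁ := by
      rw [hKe]; field_simp
    have hW' : (2 - μ) * K * jap x ^ (-μ) ≤ Wfun V₁ x := by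
      rw [hKe']; exact hW x hx
    have hP : (0:ℝ) < jap x ^ (μ / 2 - 1) := Real.rpow_pos_of_pos hJ _
    have hQ : (0:ℝ) < jap x ^ (-μ) := Real.rpow_pos_of_pos hJ _
    have h1 : jap x ^ (-μ / 2 - 1) = jap x ^ (μ / 2 - 1) * jap x ^ (-μ) := by
      rw [← Real.rpow_add hJ]; ring_nf
    have hconv : (2 - μ) * sK * jap x ^ (-μ / 2 - 1) * (1 - bsym μ K x ξ ^ 2) +
        2 * jap x ^ (μ / 2 - 1) * hone V₁ x ξ / sK =
        jap x ^ (μ / 2 - 1) *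
          ((2 - μ) * K * jap x ^ (-μ) * (1 - bsym μ K x ξ ^ 2) + 2 * hone V₁ x ξ) / sK := by
      rw [h1, ← h2]
      field_simp
    rw [hconv]
    gcongr
    nlinarith [hW', hQ, mul_pos h2μ (mul_pos hK hQ)]
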